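/- Suppose weights ω_k ≥ 0 with Σ_{k=0}^2 ω_k = 1 satisfy ω_k - γ_k = O(Δx³) where Σγ_k = 1, the sub-stencil approximations satisfy f^k_{j±1/2} = h_{j±1/2} + O(Δx³), and the linear combinations Σγ_k f^k_{j±1/2} = h_{j±1/2} - C Δx⁵ + O(Δx⁶) with the same constant C at both interfaces. Then the flux difference (Σω_k f^k_{j+1/2} - Σω_k f^k_{j-1/2})/Δx approximates (h_{j+1/2} - h_{j-1/2})/Δx with error O(Δx⁵). -/

import Mathlib

open Filter Asymptotics Topology

theorem weno5_sufficient_condition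
    (ω : ℝ → Fin 3 → ℝ) (γ : Fin 3 → ℝ)
    (fp fm : ℝ → Fin 3 → ℝ) (hp hm : ℝ → ℝ) (C : ℝ)
    (hω_nonneg : ∀ Δx : ℝ, ∀ k : Fin 3, 0 ≤ ω Δx k)
    (hω_sum : ∀ Δx : ℝ, ∑ k, ω Δx k = 1)
    (hγ_sum : ∑ k, γ k = 1)
    (hωγ : ∀ k : Fin 3, (fun Δx => ω Δx k - γ k) =O[𝓝[>] (0 : ℝ)] fun Δx => Δx ^ 3)
    (hfp : ∀ k : Fin 3, (fun Δx => fp Δx k - hp Δx) =O[𝓝[>] (0 : ℝ)] fun Δx => Δx ^ 3)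
    (hfm : ∀ k : Fin 3, (fun Δx => fm Δx k - hm Δx) =O[𝓝[>] (0 : ℝ)] fun Δx => Δx ^ 3)
    (hlinp : (fun Δx => (∑ k, γ k * fp Δx k) - (hp Δx - C * Δx ^ 5))
      =O[𝓝[>] (0 : ℝ)] fun Δx => Δx ^ 6)
    (hlinm : (fun Δx => (∑ k, γ k * fm Δx k) - (hm Δx - C * Δx ^ 5))
      =O[𝓝[>] (0 : ℝ)] fun Δx => Δx ^ 6) :
    (fun Δx => ((∑ k, ω Δx k * fp Δx k) - (∑ k, ω Δx k * fm Δx k)) / Δx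
        - (hp Δx - hm Δx) / Δx)
      =O[𝓝[>] (0 : ℝ)] fun Δx => Δx ^ 5 := by
  -- Each term (ω-γ)(fp-hp) is O(Δx^6)
  have hprod_p : ∀ k : Fin 3,
      (fun Δx => (ω Δx k - γ k) * (fp Δx k - hp Δx)) =O[𝓝[>] (0 : ℝ)]
        fun Δx => Δx ^ 6 := by
    intro k
    have := (hωγ k).mul (hfp k)
    simpa [← pow_add] using this
  have hprod_m : ∀ k : Fin 3,
      (fun Δx => (ω Δx k - γ k) * (fm Δx k - hm Δx)) =O[𝓝[>] (0 : ℝ)]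
        fun Δx => Δx ^ 6 := by
    intro k
    have := (hωγ k).mul (hfm k)
    simpa [← pow_add] using this
  have hsum_p : (fun Δx => ∑ k, (ω Δx k - γ k) * (fp Δx k - hp Δx))
      =O[𝓝[>] (0 : ℝ)] fun Δx => Δx ^ 6 := by
    have := IsBigO.sum (fun k _ => hprod_p k) (s := (Finset.univ : Finset (Fin 3)))
    simpa [Finset.sum_fn] using this
  have hsum_m : (fun Δx => ∑ k, (ω Δx k - γ k) * (fm Δx k - hm Δx))
      =O[𝓝[>] (0 : ℝ)] fun Δx => Δx ^ 6 := by
    have := IsBigO.sum (fun k _ => hprod_m k) (s := (Finset.univ : Finset (Fin 3)))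
    simpa [Finset.sum_fn] using this
  -- The numerator error is O(Δx^6)
  have hE : (fun Δx => ((∑ k, ω Δx k * fp Δx k) - (∑ k, ω Δx k * fm Δx k))
      - (hp Δx - hm Δx)) =O[𝓝[>] (0 : ℝ)] fun Δx => Δx ^ 6 := by
    have key : ∀ Δx : ℝ,
        ((∑ k, ω Δx k * fp Δx k) - (∑ k, ω Δx k * fm Δx k)) - (hp Δx - hm Δx)
        = (∑ k, (ω Δx k - γ k) * (fp Δx k - hp Δx))
          - (∑ k, (ω Δx k - γ k) * (fm Δx k - hm Δx))
          + ((∑ k, γ k * fp Δx k) - (hp Δx - C * Δx ^ 5))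
          - ((∑ k, γ k * fm Δx k) - (hm Δx - C * Δx ^ 5)) := by
      intro Δx
      have h1 := hω_sum Δx
      simp only [Fin.sum_univ_three] at h1 hγ_sum ⊢
      linear_combination (hp Δx - hm Δx) * h1 - (hp Δx - hm Δx) * hγ_sum
    calc (fun Δx => ((∑ k, ω Δx k * fp Δx k) - (∑ k, ω Δx k * fm Δx k))
          - (hp Δx - hm Δx))
        = fun Δx => (∑ k, (ω Δx k - γ k) * (fp Δx k - hp Δx))
          - (∑ k, (ω Δx k - γ k) * (fm Δx k - hm Δx))
          + ((∑ k, γ k * fp Δx k) - (hp Δx - C * Δx ^ 5))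
          - ((∑ k, γ k * fm Δx k) - (hm Δx - C * Δx ^ 5)) := funext key
      _ =O[𝓝[>] (0 : ℝ)] fun Δx => Δx ^ 6 :=
        (((hsum_p.sub hsum_m).add hlinp).sub hlinm)
  -- Divide by Δx
  have hdiv : (fun Δx : ℝ => (Δx : ℝ) ^ 6 * Δx⁻¹) =ᶠ[𝓝[>] (0 : ℝ)]
      fun Δx => Δx ^ 5 := by
    filter_upwards [self_mem_nhdsWithin] with x hx
    have hx0 : (x : ℝ) ≠ 0 := ne_of_gt hx
    field_simp
  have := (hE.mul (isBigO_refl (fun Δx : ℝ => Δx⁻¹) (𝓝[>] (0 : ℝ)))).trans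
    (hdiv.isBigO)
  have heq : (fun Δx => ((∑ k, ω Δx k * fp Δx k) - (∑ k, ω Δx k * fm Δx k)) / Δx
      - (hp Δx - hm Δx) / Δx)
      = fun Δx => (((∑ k, ω Δx k * fp Δx k) - (∑ k, ω Δx k * fm Δx k))
        - (hp Δx - hm Δx)) * Δx⁻¹ := by
    funext x
    ring
  rw [heq]
  exact this
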